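/- Let X ⊆ 2^ω. The branch family A_X = {a_x : x ∈ X} on 2^{<ω} is strongly (ℵ₀, c)-separated (every countable subfamily B can be separated by a partitioner from A_X∖B) if and only if X is a λ-set (every countable subset of X is G_δ relative to X). -/

import Mathlib

open Set Topology

/-- The length-n initial segment of x : ℕ → Bool as a finite binary sequence. -/
def res (x : ℕ → Bool) (n : ℕ) : List Bool := (List.range n).map x

/-- The branch a_x = {x↾n : n ∈ ω} ⊆ 2^{<ω}. -/
def branch (x : ℕ → Bool) : Set (List Bool) := Set.range (res x)

/-- Y is a relative G_δ subset of X. -/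
def IsRelGdelta {α : Type*} [TopologicalSpace α] (X Y : Set α) : Prop :=
  ∃ U : ℕ → Set α, (∀ n, IsOpen (U n)) ∧ Y = X ∩ ⋂ n, U n

/-- Y is a relative F_σ subset of X. -/
def IsRelFsigma {α : Type*} [TopologicalSpace α] (X Y : Set α) : Prop :=
  ∃ C : ℕ → Set α, (∀ n, IsClosed (C n)) ∧ Y = X ∩ ⋃ n, C n

/-- Z is a weak λ-set. -/
def IsWeakLambda {α : Type*} [TopologicalSpace α] (Z : Set α) : Prop :=
  ∀ Y W : Set α, Y ⊆ Z → W ⊆ Z → Y.Countable → W.Countable → Disjoint Y W →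
    ∃ H ⊆ Z, IsRelGdelta Z H ∧ IsRelFsigma Z H ∧ Y ⊆ H ∧ W ⊆ Z \ H

/-- S is an F_σ subset of the whole space. -/
def IsFsigma {α : Type*} [TopologicalSpace α] (S : Set α) : Prop :=
  ∃ C : ℕ → Set α, (∀ n, IsClosed (C n)) ∧ S = ⋃ n, C n

lemma res_eq_res_iff {x y : ℕ → Bool} {n : ℕ} : res x n = res y n ↔ ∀ k < n, x k = y k := by
  simp [res, List.map_eq_map_iff]

lemma length_res (x : ℕ → Bool) (n : ℕ) : (res x n).length = n := by simp [res]

lemma res_inj (x : ℕ → Bool) : Function.Injective (res x) := by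
  intro m n h
  have := congrArg List.length h
  simpa [length_res] using this

lemma branch_inj : Function.Injective branch := by
  intro x y h
  funext n
  have hx : res x (n+1) ∈ branch y := h ▸ Set.mem_range_self _
  obtain ⟨m, hm⟩ := hx
  have hlen : m = n + 1 := by
    have := congrArg List.length hm
    simpa [length_res] using this
  subst hlen
  exact (res_eq_res_iff.mp hm.symm) n (Nat.lt_succ_self n)

lemma cyl_subset {s : Set (ℕ → Bool)} (hs : IsOpen s) {x : ℕ → Bool} (hx : x ∈ s) :
    ∃ N, ∀ y : ℕ → Bool, (∀ k < N, y k = x k) → y ∈ s := by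
  obtain ⟨I, u, hu, hIs⟩ := isOpen_pi_iff.mp hs x hx
  rcases I.bddAbove with ⟨N, hN⟩
  refine ⟨N + 1, fun y hy => hIs ?_⟩
  intro a ha
  have : y a = x a := hy a (Nat.lt_succ_of_le (hN ha))
  rw [this]
  exact (hu a ha).2

lemma isOpen_res_mem (m : ℕ) (Z : Set (List Bool)) : IsOpen {x : ℕ → Bool | res x m ∈ Z} := by
  rw [isOpen_iff_mem_nhds]
  intro x hx
  have h1 : Set.pi (Set.Iio m) (fun k => {x k}) ∈ nhds x := by
    apply set_pi_mem_nhds (Set.finite_Iio m)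
    intro k _
    exact mem_nhds_discrete.mpr rfl
  refine Filter.mem_of_superset h1 (fun y hy => ?_)
  have : res y m = res x m := res_eq_res_iff.mpr fun k hk => hy k hk
  simpa [this] using hx

theorem stmt10 (X : Set (ℕ → Bool)) :
    (∀ B ⊆ branch '' X, B.Countable →
      ∃ Z : Set (List Bool),
        (∀ a ∈ B, (a \ Z).Finite) ∧ (∀ a ∈ (branch '' X) \ B, (a ∩ Z).Finite)) ↔
      (∀ Y ⊆ X, Y.Countable → IsRelGdelta X Y) := by
  constructor
  · -- partitioners ⇒ λ-set
    intro h Y hYX hYc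
    obtain ⟨Z, hZ1, hZ2⟩ := h (branch '' Y) (Set.image_mono hYX) (hYc.image _)
    refine ⟨fun n => ⋃ m ∈ Set.Ici n, {x | res x m ∈ Z},
      fun n => isOpen_biUnion fun m _ => isOpen_res_mem m Z, ?_⟩
    ext x
    constructor
    · intro hxY
      refine ⟨hYX hxY, Set.mem_iInter.mpr fun n => ?_⟩
      have hfin : {m | res x m ∉ Z}.Finite := by
        have h1 : (branch x \ Z).Finite := hZ1 _ ⟨x, hxY, rfl⟩
        have h2 : branch x \ Z = res x '' {m | res x m ∉ Z} := by
          ext a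
          constructor
          · rintro ⟨⟨m, rfl⟩, hz⟩
            exact ⟨m, hz, rfl⟩
          · rintro ⟨m, hz, rfl⟩
            exact ⟨⟨m, rfl⟩, hz⟩
        exact Set.Finite.of_finite_image (h2 ▸ h1) ((res_inj x).injOn)
      obtain ⟨N, hN⟩ := hfin.bddAbove
      have hm : res x (max n (N + 1)) ∈ Z := by
        by_contra hc
        have := hN hc
        omega
      exact Set.mem_biUnion (Set.mem_Ici.mpr (le_max_left n (N + 1))) hm
    · rintro ⟨hxX, hxI⟩
      by_contra hxY
      have hb : branch x ∈ branch '' X \ branch '' Y := by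
        refine ⟨⟨x, hxX, rfl⟩, ?_⟩
        rintro ⟨y, hy, hxy⟩
        exact hxY (branch_inj hxy ▸ hy)
      have hfin : {m | res x m ∈ Z}.Finite := by
        have h1 : (branch x ∩ Z).Finite := hZ2 _ hb
        have h2 : branch x ∩ Z = res x '' {m | res x m ∈ Z} := by
          ext a
          constructor
          · rintro ⟨⟨m, rfl⟩, hz⟩
            exact ⟨m, hz, rfl⟩
          · rintro ⟨m, hz, rfl⟩
            exact ⟨⟨m, rfl⟩, hz⟩
        exact Set.Finite.of_finite_image (h2 ▸ h1) ((res_inj x).injOn)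
      obtain ⟨N, hN⟩ := hfin.bddAbove
      have := Set.mem_iInter.mp hxI (N + 1)
      obtain ⟨m, hm, hmZ⟩ := Set.mem_iUnion₂.mp this
      have := hN hmZ
      simp only [Set.mem_Ici] at hm
      omega
  · -- λ-set ⇒ partitioners
    intro h B hBX hBc
    set Y : Set (ℕ → Bool) := X ∩ branch ⁻¹' B with hYdef
    have hYc : Y.Countable := (hBc.preimage branch_inj).mono Set.inter_subset_right
    obtain ⟨U, hUo, hYU⟩ := h Y Set.inter_subset_left hYc
    set V : ℕ → Set (ℕ → Bool) := fun n => ⋂ m ∈ Finset.range (n+1), U m with hVdef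
    have hVo : ∀ n, IsOpen (V n) := fun n => isOpen_biInter_finset fun m _ => hUo m
    have hVU : ∀ n m, m ≤ n → V n ⊆ U m := fun n m hmn =>
      Set.biInter_subset_of_mem (Finset.mem_range.mpr (by omega))
    have hYV : ∀ y ∈ Y, ∀ n, y ∈ V n := by
      intro y hy n
      have : y ∈ X ∩ ⋂ m, U m := hYU ▸ hy
      exact Set.mem_iInter₂.mpr fun m _ => Set.mem_iInter.mp this.2 m
    rcases Set.eq_empty_or_nonempty Y with hYe | hYne
    · refine ⟨∅, ?_, ?_⟩
      · intro a haB
        obtain ⟨x, hxX, rfl⟩ := hBX haB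
        have : x ∈ Y := ⟨hxX, haB⟩
        rw [hYe] at this
        exact absurd this (Set.notMem_empty x)
      · intro a _
        simp
    · obtain ⟨f, hf⟩ := Set.Countable.exists_eq_range hYc hYne
      have hfY : ∀ i, f i ∈ Y := fun i => hf ▸ Set.mem_range_self i
      have hNex : ∀ i, ∃ N, ∀ y : ℕ → Bool, (∀ k < N, y k = f i k) → y ∈ V i :=
        fun i => cyl_subset (hVo i) (hYV _ (hfY i) i)
      choose N hN using hNex
      refine ⟨⋃ i, res (f i) '' Set.Ici (N i), ?_, ?_⟩
      · -- branches in B are almost contained in Z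
        intro a haB
        obtain ⟨x, hxX, rfl⟩ := hBX haB
        have hxY : x ∈ Y := ⟨hxX, haB⟩
        obtain ⟨i, hi⟩ : ∃ i, f i = x := by
          have := hf ▸ hxY
          exact this
        refine Set.Finite.subset ((Set.finite_Iio (N i)).image (res x)) ?_
        rintro a ⟨⟨m, rfl⟩, hz⟩
        refine ⟨m, ?_, rfl⟩
        simp only [Set.mem_Iio]
        by_contra hc
        push_neg at hc
        exact hz (Set.mem_iUnion.mpr ⟨i, ⟨m, hc, by rw [hi]⟩⟩)
      · -- other branches meet Z finitely
        rintro a ⟨⟨x, hxX, rfl⟩, haB⟩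
        have hxY : x ∉ Y := fun hx => haB hx.2
        obtain ⟨k, hk⟩ : ∃ k, x ∉ U k := by
          by_contra hc
          push_neg at hc
          exact hxY (hYU ▸ ⟨hxX, Set.mem_iInter.mpr hc⟩)
        have hfin : {n | res x n ∈ ⋃ i, res (f i) '' Set.Ici (N i)}.Finite := by
          refine Set.Finite.subset (Set.Finite.biUnion (Finset.range k).finite_toSet
            (fun i _ => ?_) : (⋃ i ∈ Finset.range k, {n | res x n = res (f i) n}).Finite) ?_
          · -- each agreement set is finite
            have hne : x ≠ f i := fun he => hxY (he ▸ hfY i)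
            obtain ⟨d, hd⟩ := Function.ne_iff.mp hne
            refine Set.Finite.subset (Set.finite_Iic d) ?_
            intro n hn
            simp only [Set.mem_setOf_eq] at hn
            simp only [Set.mem_Iic]
            by_contra hc
            push_neg at hc
            exact hd (res_eq_res_iff.mp hn d hc)
          · intro n hn
            obtain ⟨i, m, hm, heq⟩ := Set.mem_iUnion.mp hn
            have hmn : m = n := by
              have := congrArg List.length heq
              simpa [length_res] using this
            subst hmn
            simp only [Set.mem_Ici] at hm
            have hagree : ∀ j < m, x j = f i j := fun j hj =>
              (res_eq_res_iff.mp heq.symm) j hj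
            have hxV : x ∈ V i := hN i x fun j hj => hagree j (lt_of_lt_of_le hj hm)
            have hik : i < k := by
              by_contra hc
              push_neg at hc
              exact hk (hVU i k hc hxV)
            exact Set.mem_biUnion (Finset.mem_range.mpr hik) heq.symm
        refine Set.Finite.subset (hfin.image (res x)) ?_
        rintro a ⟨⟨m, rfl⟩, hz⟩
        exact ⟨m, hz, rfl⟩
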